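/- arXiv:1812.08285 — 4 statements merged into one kernel-verified Lean document; each statement's English description precedes it below -/
import Mathlib

section
/- Let x ∈ (−1,1), U, V, W ∈ ℝ, and p, q ∈ ℝ with p ≠ 0. Define λ₁₁ = e^{2U+V}(1−x)·cosh W, λ₁₂ = (e^{2U}/p)·( √(1−x²)·sinh W − q·e^{V}(1−x)·cosh W ), and λ₂₂ = (e^{2U}/p²)·( q²e^{V}(1−x)·cosh W − 2q·√(1−x²)·sinh W + e^{−V}(1+x)·cosh W ). Then: (i) λ₁₁·λ₂₂ − λ₁₂² = e^{4U}(1−x²)/p²; (ii) q²·λ₁₁ + 2pq·λ₁₂ + p²·λ₂₂ = e^{2U−V}(1+x)·cosh W; and (iii) (1−x²)² / ( (λ₁₁λ₂₂ − λ₁₂²)·λ₁₁ ) = p²(1+x) / ( e^{6U+V}·cosh W ). -/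
/-- Properties of the lens-space parameterization `(U,V,W)` of the Gram matrix `λᵢⱼ`:
the determinant formula, the contraction with the rod vector `(q,p)`, and the
conical-regularity ratio. -/
theorem stmt5 (x U V W p q : ℝ) (hx : x ∈ Set.Ioo (-1 : ℝ) 1) (hp : p ≠ 0)
    (l11 l12 l22 : ℝ)
    (h11 : l11 = Real.exp (2 * U + V) * (1 - x) * Real.cosh W)
    (h12 : l12 = (Real.exp (2 * U) / p) * (Real.sqrt (1 - x ^ 2) * Real.sinh W
      - q * Real.exp V * (1 - x) * Real.cosh W))
    (h22 : l22 = (Real.exp (2 * U) / p ^ 2) * (q ^ 2 * Real.exp V * (1 - x) * Real.cosh W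
      - 2 * q * Real.sqrt (1 - x ^ 2) * Real.sinh W
      + Real.exp (-V) * (1 + x) * Real.cosh W)) :
    l11 * l22 - l12 ^ 2 = Real.exp (4 * U) * (1 - x ^ 2) / p ^ 2
    ∧ q ^ 2 * l11 + 2 * p * q * l12 + p ^ 2 * l22
        = Real.exp (2 * U - V) * (1 + x) * Real.cosh W
    ∧ (1 - x ^ 2) ^ 2 / ((l11 * l22 - l12 ^ 2) * l11)
        = p ^ 2 * (1 + x) / (Real.exp (6 * U + V) * Real.cosh W) := by
  obtain ⟨hx1, hx2⟩ := hx
  have hs : Real.sqrt (1 - x ^ 2) ^ 2 = 1 - x ^ 2 := Real.sq_sqrt (by nlinarith)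
  have hc : Real.cosh W ^ 2 - Real.sinh W ^ 2 = 1 := Real.cosh_sq_sub_sinh_sq W
  have e1 : Real.exp (2 * U + V) = Real.exp (2 * U) * Real.exp V := Real.exp_add _ _
  have e2 : Real.exp (4 * U) = Real.exp (2 * U) * Real.exp (2 * U) := by
    rw [← Real.exp_add]; ring_nf
  have e3 : Real.exp (2 * U - V) = Real.exp (2 * U) * Real.exp (-V) := by
    rw [← Real.exp_add]; ring_nf
  have e4 : Real.exp (6 * U + V) = Real.exp (2 * U) ^ 3 * Real.exp V := by
    rw [pow_succ, pow_two, ← Real.exp_add, ← Real.exp_add, ← Real.exp_add]; ring_nf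
  have e5 : Real.exp V * Real.exp (-V) = 1 := by
    rw [← Real.exp_add]; simp
  have hA : Real.exp (2 * U) ≠ 0 := (Real.exp_pos _).ne'
  have hB : Real.exp V ≠ 0 := (Real.exp_pos _).ne'
  have hC : Real.cosh W ≠ 0 := (Real.cosh_pos W).ne'
  have hdet : l11 * l22 - l12 ^ 2 = Real.exp (4 * U) * (1 - x ^ 2) / p ^ 2 := by
    subst h11 h12 h22
    rw [e1, e2]
    field_simp
    linear_combination ((1 - x ^ 2) * Real.cosh W ^ 2) * e5
      - (Real.sinh W ^ 2) * hs
      + ((1 - x ^ 2)) * hc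
  refine ⟨hdet, ?_, ?_⟩
  · subst h11 h12 h22
    rw [e1, e3]
    field_simp
    ring
  · rw [hdet, h11, e1, e2, e4]
    have h1x : (1 : ℝ) - x ≠ 0 := by linarith
    have h1x' : (1 : ℝ) - x ^ 2 ≠ 0 := by nlinarith
    rw [div_eq_div_iff (by positivity) (by positivity)]
    field_simp
    ring
end

section
/- For every real number a > 0, one has (e^{2a} − 1 − 2a)·(e^{−2a} − 1 + 2a) > 4a⁴. -/
open Real

/-- `cosh x > 1 + x²/2` for `x > 0`. -/
lemma cosh_gt (x : ℝ) (hx : 0 < x) : 1 + x ^ 2 / 2 < Real.cosh x := by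
  have key : StrictMonoOn (fun t : ℝ => Real.cosh t - 1 - t ^ 2 / 2) (Set.Ici 0) := by
    apply strictMonoOn_of_deriv_pos (convex_Ici 0)
    · fun_prop
    · intro t ht
      rw [interior_Ici] at ht
      have h1 : HasDerivAt (fun t : ℝ => Real.cosh t - 1 - t ^ 2 / 2)
          (Real.sinh t - t) t := by
        have := ((Real.hasDerivAt_cosh t).sub_const 1).sub
          (((hasDerivAt_pow 2 t).div_const 2))
        refine this.congr_deriv ?_
        norm_num
      rw [h1.deriv]
      have := Real.self_lt_sinh_iff.mpr ht
      linarith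
  have h0 : (0:ℝ) ∈ Set.Ici (0:ℝ) := Set.mem_Ici.mpr le_rfl
  have hx' : x ∈ Set.Ici (0:ℝ) := Set.mem_Ici.mpr hx.le
  have := key h0 hx' hx
  simp [Real.cosh_zero] at this
  linarith

/-- `G(x) = 2x sinh x − 2 cosh x + 2 − x² − x⁴/4 > 0` for `x > 0`. -/
lemma G_pos (x : ℝ) (hx : 0 < x) :
    0 < 2 * x * Real.sinh x - 2 * Real.cosh x + 2 - x ^ 2 - x ^ 4 / 4 := by
  have key : StrictMonoOn
      (fun t : ℝ => 2 * t * Real.sinh t - 2 * Real.cosh t + 2 - t ^ 2 - t ^ 4 / 4)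
      (Set.Ici 0) := by
    apply strictMonoOn_of_deriv_pos (convex_Ici 0)
    · fun_prop
    · intro t ht
      rw [interior_Ici] at ht
      have h1 : HasDerivAt (fun t : ℝ => 2 * t * Real.sinh t - 2 * Real.cosh t + 2
          - t ^ 2 - t ^ 4 / 4)
          (2 * t * Real.cosh t - 2 * t - t ^ 3) t := by
        have := ((((((hasDerivAt_id t).const_mul 2).mul (Real.hasDerivAt_sinh t)).sub
          ((Real.hasDerivAt_cosh t).const_mul 2)).add_const 2).sub
          (hasDerivAt_pow 2 t)).sub ((hasDerivAt_pow 4 t).div_const 4)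
        refine this.congr_deriv ?_
        simp only [id]
        push_cast
        ring
      rw [h1.deriv]
      have hc := cosh_gt t ht
      nlinarith [mul_pos ht (by linarith : (0:ℝ) < 2 * Real.cosh t - 2 - t ^ 2)]
  have h0 : (0:ℝ) ∈ Set.Ici (0:ℝ) := Set.mem_Ici.mpr le_rfl
  have hx' : x ∈ Set.Ici (0:ℝ) := Set.mem_Ici.mpr hx.le
  have := key h0 hx' hx
  simp [Real.sinh_zero, Real.cosh_zero] at this
  linarith

/-- The strict inequality `(e^{2a} - 1 - 2a)(e^{-2a} - 1 + 2a) > 4a⁴` for `a > 0`,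
which is the positivity of the completed-square coefficient in the
energy-convexity lemma. -/
theorem stmt7 (a : ℝ) (ha : 0 < a) :
    (Real.exp (2 * a) - 1 - 2 * a) * (Real.exp (-(2 * a)) - 1 + 2 * a) > 4 * a ^ 4 := by
  have hx : 0 < 2 * a := by linarith
  have hG := G_pos (2 * a) hx
  rw [Real.sinh_eq, Real.cosh_eq] at hG
  have hprod : (Real.exp (2 * a) - 1 - 2 * a) * (Real.exp (-(2 * a)) - 1 + 2 * a)
      = 2 * (2 * a) * ((Real.exp (2*a) - Real.exp (-(2*a))) / 2)
        - 2 * ((Real.exp (2*a) + Real.exp (-(2*a))) / 2) + 2 - (2*a) ^ 2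
        + (Real.exp (2 * a) * Real.exp (-(2 * a)) - 1) := by ring
  rw [← Real.exp_add] at hprod
  simp at hprod
  nlinarith [hG, hprod]
end

section
/- Let a > 0 and let (c₁, c₂) ∈ ℝ² with (c₁, c₂) ≠ (0, 0). Then (1/2)(e^{2a} − 1 − 2a)·c₁² + 2a²·c₁c₂ + (1/2)(e^{−2a} − 1 + 2a)·c₂² > 0. -/
open Real

private lemma pos_of_deriv_pos' (f : ℝ → ℝ) (hf : Differentiable ℝ f) (h0 : f 0 = 0)
    (hd : ∀ x > (0:ℝ), 0 < deriv f x) {x : ℝ} (hx : 0 < x) : 0 < f x := by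
  have hmono : StrictMonoOn f (Set.Ici (0:ℝ)) := by
    apply strictMonoOn_of_deriv_pos (convex_Ici 0) hf.continuous.continuousOn
    intro y hy
    rw [interior_Ici] at hy
    exact hd y hy
  have := hmono Set.self_mem_Ici (Set.mem_Ici.2 hx.le) hx
  rwa [h0] at this

/-- `e^t + e^{-t} - 2 > 0` for `t ≠ 0`. -/
private lemma cosh_aux {t : ℝ} (ht : t ≠ 0) : 0 < Real.exp t + Real.exp (-t) - 2 := by
  have h1 : Real.exp (t/2) * Real.exp (t/2) = Real.exp t := by
    rw [← Real.exp_add]; ring_nf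
  have h2 : Real.exp (-(t/2)) * Real.exp (-(t/2)) = Real.exp (-t) := by
    rw [← Real.exp_add]; ring_nf
  have h3 : Real.exp (t/2) * Real.exp (-(t/2)) = 1 := by
    rw [← Real.exp_add, add_neg_cancel, Real.exp_zero]
  have hne : Real.exp (t/2) - Real.exp (-(t/2)) ≠ 0 := by
    intro h
    have heq : Real.exp (t/2) = Real.exp (-(t/2)) := by linarith [sub_eq_zero.1 h]
    have := Real.exp_injective heq
    apply ht; linarith
  nlinarith [sq_pos_of_ne_zero hne, h1, h2, h3]

/-- `e^t - e^{-t} - 2t > 0` for `t > 0`. -/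
private lemma sinh_aux {t : ℝ} (ht : 0 < t) : 0 < Real.exp t - Real.exp (-t) - 2 * t := by
  have H : ∀ y : ℝ, HasDerivAt (fun s => Real.exp s - Real.exp (-s) - 2 * s)
      (Real.exp y + Real.exp (-y) - 2) y := by
    intro y
    have h1 : HasDerivAt Real.exp (Real.exp y) y := Real.hasDerivAt_exp y
    have h2 : HasDerivAt (fun s : ℝ => Real.exp (-s)) (-Real.exp (-y)) y := by
      simpa using ((hasDerivAt_id y).neg.exp)
    have h3 : HasDerivAt (fun s : ℝ => 2 * s) 2 y := by
      simpa using (hasDerivAt_id y).const_mul (2:ℝ)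
    have := (h1.sub h2).sub h3
    refine this.congr_deriv ?_; ring
  apply pos_of_deriv_pos' _ (fun y => ((H y).differentiableAt)) (by simp) _ ht
  intro y hy
  rw [(H y).deriv]
  exact cosh_aux (ne_of_gt hy)

/-- `e^x + e^{-x} - 2 - x² > 0` for `x > 0`. -/
private lemma cosh_quad {x : ℝ} (hx : 0 < x) : 0 < Real.exp x + Real.exp (-x) - 2 - x ^ 2 := by
  have H : ∀ y : ℝ, HasDerivAt (fun s => Real.exp s + Real.exp (-s) - 2 - s ^ 2)
      (Real.exp y - Real.exp (-y) - 2 * y) y := by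
    intro y
    have h1 : HasDerivAt Real.exp (Real.exp y) y := Real.hasDerivAt_exp y
    have h2 : HasDerivAt (fun s : ℝ => Real.exp (-s)) (-Real.exp (-y)) y := by
      simpa using ((hasDerivAt_id y).neg.exp)
    have h3 : HasDerivAt (fun s : ℝ => s ^ 2) (2 * y) y := by
      simpa using (hasDerivAt_pow 2 y)
    have := ((h1.add h2).sub (hasDerivAt_const y 2)).sub h3
    refine this.congr_deriv ?_; ring
  apply pos_of_deriv_pos' _ (fun y => ((H y).differentiableAt)) (by norm_num) _ hx
  intro y hy
  rw [(H y).deriv]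
  exact sinh_aux hy

/-- Key inequality: `2 - x² - x⁴/4 - (1-x)eˣ - (1+x)e^{-x} > 0` for `x > 0`. -/
private lemma key_aux {x : ℝ} (hx : 0 < x) :
    0 < 2 - x ^ 2 - x ^ 4 / 4 - (1 - x) * Real.exp x - (1 + x) * Real.exp (-x) := by
  have H : ∀ y : ℝ, HasDerivAt
      (fun s => 2 - s ^ 2 - s ^ 4 / 4 - (1 - s) * Real.exp s - (1 + s) * Real.exp (-s))
      (y * (Real.exp y + Real.exp (-y) - 2 - y ^ 2)) y := by
    intro y
    have hexp : HasDerivAt Real.exp (Real.exp y) y := Real.hasDerivAt_exp y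
    have hnexp : HasDerivAt (fun s : ℝ => Real.exp (-s)) (-Real.exp (-y)) y := by
      simpa using ((hasDerivAt_id y).neg.exp)
    have h2 : HasDerivAt (fun s : ℝ => s ^ 2) (2 * y) y := by
      simpa using (hasDerivAt_pow 2 y)
    have h4 : HasDerivAt (fun s : ℝ => s ^ 4 / 4) (4 * y ^ 3 / 4) y := by
      simpa using (hasDerivAt_pow 4 y).div_const 4
    have h5 : HasDerivAt (fun s : ℝ => (1 - s) * Real.exp s)
        ((-1) * Real.exp y + (1 - y) * Real.exp y) y := by
      exact (((hasDerivAt_const y (1:ℝ)).sub (hasDerivAt_id y)).mul hexp).congr_deriv (by simp only [Pi.sub_apply, id]; ring)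
    have h6 : HasDerivAt (fun s : ℝ => (1 + s) * Real.exp (-s))
        (1 * Real.exp (-y) + (1 + y) * (-Real.exp (-y))) y := by
      exact (((hasDerivAt_const y (1:ℝ)).add (hasDerivAt_id y)).mul hnexp).congr_deriv (by simp only [Pi.add_apply, id]; ring)
    have := ((((hasDerivAt_const y (2:ℝ)).sub h2).sub h4).sub h5).sub h6
    refine this.congr_deriv ?_; ring
  apply pos_of_deriv_pos' _ (fun y => ((H y).differentiableAt)) (by norm_num) _ hx
  intro y hy
  rw [(H y).deriv]
  exact mul_pos hy (cosh_quad hy)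

/-- Positive definiteness of the second-variation quadratic form
`½(e^{2a}-1-2a)c₁² + 2a²c₁c₂ + ½(e^{-2a}-1+2a)c₂²` for `a > 0`. -/
theorem stmt10 (a : ℝ) (ha : 0 < a) (c₁ c₂ : ℝ) (hc : (c₁, c₂) ≠ (0, 0)) :
    0 < (1 / 2) * (Real.exp (2 * a) - 1 - 2 * a) * c₁ ^ 2 + 2 * a ^ 2 * c₁ * c₂
      + (1 / 2) * (Real.exp (-(2 * a)) - 1 + 2 * a) * c₂ ^ 2 := by
  set x := 2 * a with hxdef
  have hx : 0 < x := by positivity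
  set A := Real.exp x - 1 - x with hA
  set B := Real.exp (-x) - 1 + x with hB
  have hApos : 0 < A := by
    have := Real.add_one_lt_exp (x := x) (ne_of_gt hx)
    simp only [hA]; linarith
  have hBpos : 0 < B := by
    have := Real.add_one_lt_exp (x := -x) (by simpa using ne_of_gt hx)
    simp only [hB]; linarith
  have hmul : Real.exp x * Real.exp (-x) = 1 := by
    rw [← Real.exp_add, add_neg_cancel, Real.exp_zero]
  have hprod : A * B = 2 - x ^ 2 - (1 - x) * Real.exp x - (1 + x) * Real.exp (-x) := by
    simp only [hA, hB]; nlinarith [hmul]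
  have hdet : 4 * a ^ 4 < A * B := by
    have := key_aux hx
    have hx4 : x ^ 4 = 16 * a ^ 4 := by rw [hxdef]; ring
    nlinarith [hprod]
  by_cases hc2 : c₂ = 0
  · have hc1 : c₁ ≠ 0 := by
      intro h; exact hc (by simp [h, hc2])
    have hc1sq : 0 < c₁ ^ 2 := sq_pos_of_ne_zero hc1
    subst hc2
    simp only [mul_zero, zero_pow, add_zero]
    nlinarith [mul_pos hApos hc1sq]
  · have hc2sq : 0 < c₂ ^ 2 := sq_pos_of_ne_zero hc2
    have key : 0 < (A * c₁ + 2 * a ^ 2 * c₂) ^ 2 + (A * B - 4 * a ^ 4) * c₂ ^ 2 := by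
      have := mul_pos (by linarith : (0:ℝ) < A * B - 4 * a ^ 4) hc2sq
      nlinarith [sq_nonneg (A * c₁ + 2 * a ^ 2 * c₂)]
    have expand : 2 * A * ((1 / 2) * A * c₁ ^ 2 + 2 * a ^ 2 * c₁ * c₂ + (1 / 2) * B * c₂ ^ 2)
        = (A * c₁ + 2 * a ^ 2 * c₂) ^ 2 + (A * B - 4 * a ^ 4) * c₂ ^ 2 := by ring
    nlinarith [key, hApos, expand]
end

section
/- Let a > 0 and m > 0. Then there exists δ > 0 such that for all c₁, c₂ ∈ ℝ with |c₁·e^{a} + c₂·e^{−a}| ≥ m, one has (1/2)(e^{2a} − 1 − 2a)·c₁² + 2a²·c₁c₂ + (1/2)(e^{−2a} − 1 + 2a)·c₂² ≥ δ. -/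
private lemma nonneg_of_hasDerivAt (f f' : ℝ → ℝ)
    (hd : ∀ x, HasDerivAt f (f' x) x) (h0 : 0 ≤ f 0)
    (hd0 : ∀ x, 0 ≤ x → 0 ≤ f' x) : ∀ x, 0 ≤ x → 0 ≤ f x := by
  intro x hx
  have hm : MonotoneOn f (Set.Ici 0) := by
    apply monotoneOn_of_deriv_nonneg (convex_Ici 0)
    · exact fun y _ => (hd y).continuousAt.continuousWithinAt
    · exact fun y _ => (hd y).differentiableAt.differentiableWithinAt
    · intro y hy
      rw [(hd y).deriv]
      rw [interior_Ici] at hy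
      exact hd0 y (le_of_lt hy)
  calc (0:ℝ) ≤ f 0 := h0
    _ ≤ f x := hm Set.self_mem_Ici hx hx

private lemma expNeg_hasDerivAt (x : ℝ) :
    HasDerivAt (fun y : ℝ => Real.exp (-y)) (-Real.exp (-x)) x := by
  simpa [Function.comp_def] using ((Real.hasDerivAt_exp (-x)).comp x ((hasDerivAt_id x).neg))

private lemma expNeg_le2 : ∀ x : ℝ, 0 ≤ x → Real.exp (-x) ≤ 1 - x + x^2/2 := by
  have := nonneg_of_hasDerivAt (fun x => 1 - x + x^2/2 - Real.exp (-x))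
      (fun x => -1 + x + Real.exp (-x))
      (fun x => by
        have h := expNeg_hasDerivAt x
        have : HasDerivAt (fun y : ℝ => 1 - y + y^2/2 - Real.exp (-y))
            (0 - 1 + 2*x^(2-1)/2 - (-Real.exp (-x))) x := by
          exact ((((hasDerivAt_const x (1:ℝ)).sub (hasDerivAt_id x)).add
            ((hasDerivAt_pow 2 x).div_const 2)).sub h)
        convert this using 1; norm_num)
      (by norm_num)
      (fun x hx => by
        have h := Real.add_one_le_exp (-x)
        linarith)
  intro x hx
  have := this x hx
  linarith

private lemma expNeg_ge3 : ∀ x : ℝ, 0 ≤ x → 1 - x + x^2/2 - x^3/6 ≤ Real.exp (-x) := by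
  have := nonneg_of_hasDerivAt (fun x => Real.exp (-x) - (1 - x + x^2/2 - x^3/6))
      (fun x => -Real.exp (-x) - (-1 + x - x^2/2))
      (fun x => by
        have h := expNeg_hasDerivAt x
        have : HasDerivAt (fun y : ℝ => Real.exp (-y) - (1 - y + y^2/2 - y^3/6))
            (-Real.exp (-x) - (0 - 1 + 2*x^(2-1)/2 - 3*x^(3-1)/6)) x := by
          exact h.sub ((((hasDerivAt_const x (1:ℝ)).sub (hasDerivAt_id x)).add
            ((hasDerivAt_pow 2 x).div_const 2)).sub ((hasDerivAt_pow 3 x).div_const 6))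
        convert this using 1; norm_num; ring)
      (by norm_num)
      (fun x hx => by
        have h := expNeg_le2 x hx
        linarith)
  intro x hx
  have := this x hx
  linarith

private lemma expNeg_le4 : ∀ x : ℝ, 0 ≤ x → Real.exp (-x) ≤ 1 - x + x^2/2 - x^3/6 + x^4/24 := by
  have := nonneg_of_hasDerivAt (fun x => 1 - x + x^2/2 - x^3/6 + x^4/24 - Real.exp (-x))
      (fun x => -1 + x - x^2/2 + x^3/6 + Real.exp (-x))
      (fun x => by
        have h := expNeg_hasDerivAt x
        have : HasDerivAt (fun y : ℝ => 1 - y + y^2/2 - y^3/6 + y^4/24 - Real.exp (-y))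
            (0 - 1 + 2*x^(2-1)/2 - 3*x^(3-1)/6 + 4*x^(4-1)/24 - (-Real.exp (-x))) x := by
          exact (((((hasDerivAt_const x (1:ℝ)).sub (hasDerivAt_id x)).add
            ((hasDerivAt_pow 2 x).div_const 2)).sub ((hasDerivAt_pow 3 x).div_const 6)).add
            ((hasDerivAt_pow 4 x).div_const 24)).sub h
        convert this using 1; norm_num; ring)
      (by norm_num)
      (fun x hx => by
        have h := expNeg_ge3 x hx
        linarith)
  intro x hx
  have := this x hx
  linarith

private lemma expNeg_ge5 : ∀ x : ℝ, 0 ≤ x →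
    1 - x + x^2/2 - x^3/6 + x^4/24 - x^5/120 ≤ Real.exp (-x) := by
  have := nonneg_of_hasDerivAt
      (fun x => Real.exp (-x) - (1 - x + x^2/2 - x^3/6 + x^4/24 - x^5/120))
      (fun x => -Real.exp (-x) - (-1 + x - x^2/2 + x^3/6 - x^4/24))
      (fun x => by
        have h := expNeg_hasDerivAt x
        have : HasDerivAt
            (fun y : ℝ => Real.exp (-y) - (1 - y + y^2/2 - y^3/6 + y^4/24 - y^5/120))
            (-Real.exp (-x) - (0 - 1 + 2*x^(2-1)/2 - 3*x^(3-1)/6 + 4*x^(4-1)/24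
              - 5*x^(5-1)/120)) x := by
          exact h.sub ((((((hasDerivAt_const x (1:ℝ)).sub (hasDerivAt_id x)).add
            ((hasDerivAt_pow 2 x).div_const 2)).sub ((hasDerivAt_pow 3 x).div_const 6)).add
            ((hasDerivAt_pow 4 x).div_const 24)).sub ((hasDerivAt_pow 5 x).div_const 120))
        convert this using 1; norm_num; ring)
      (by norm_num)
      (fun x hx => by
        have h := expNeg_le4 x hx
        linarith)
  intro x hx
  have := this x hx
  linarith

private lemma exp_ge5 (x : ℝ) (hx : 0 ≤ x) :
    1 + x + x^2/2 + x^3/6 + x^4/24 + x^5/120 ≤ Real.exp x := by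
  have h := Real.sum_le_exp_of_nonneg hx 6
  simp [Finset.sum_range_succ, Nat.factorial] at h
  convert h using 1

/-- Core analytic inequality: `(e^u−1−u)(e^{−u}−1+u) > u⁴/4` for `u > 0`. -/
private lemma keyquad (u : ℝ) (hu : 0 < u) :
    u^4/4 < (Real.exp u - 1 - u) * (Real.exp (-u) - 1 + u) := by
  have h1 := exp_ge5 u hu.le
  have hXq : u^2/2 + u^3/6 + u^4/24 + u^5/120 ≤ Real.exp u - 1 - u := by linarith
  have hXpos : 0 < u^2/2 + u^3/6 + u^4/24 + u^5/120 := by positivity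
  rcases le_or_gt u (5/2) with hc | hc
  · have h2 := expNeg_ge5 u hu.le
    have hYq : u^2/2 - u^3/6 + u^4/24 - u^5/120 ≤ Real.exp (-u) - 1 + u := by linarith
    have hq2 : 0 < u^2/2 - u^3/6 + u^4/24 - u^5/120 := by nlinarith [sq_nonneg u, hu, hc]
    have hprod : (u^2/2 + u^3/6 + u^4/24 + u^5/120) * (u^2/2 - u^3/6 + u^4/24 - u^5/120)
        ≤ (Real.exp u - 1 - u) * (Real.exp (-u) - 1 + u) :=
      mul_le_mul hXq hYq hq2.le (le_trans hXpos.le hXq)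
    have haux : 0 < u^6 * (200 - 15*u^2 - u^4) := by
      apply mul_pos (pow_pos hu 6)
      have hu2 : u^2 ≤ 25/4 := by nlinarith
      have hu4 : u^4 ≤ 625/16 := by nlinarith [sq_nonneg (u^2 - 25/4)]
      linarith
    nlinarith [hprod, haux]
  · have hY : u - 1 ≤ Real.exp (-u) - 1 + u := by
      have := Real.exp_pos (-u); linarith
    have hYpos : (0:ℝ) < u - 1 := by linarith
    have hprod : (u^2/2 + u^3/6 + u^4/24 + u^5/120) * (u - 1)
        ≤ (Real.exp u - 1 - u) * (Real.exp (-u) - 1 + u) :=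
      mul_le_mul hXq hY hYpos.le (le_trans hXpos.le hXq)
    nlinarith [hprod, hc, pow_pos hu 2, pow_pos hu 3, pow_pos hu 4, pow_pos hu 5,
      mul_pos (pow_pos hu 3) (sub_pos.2 hc), mul_pos (pow_pos hu 4) (sub_pos.2 hc)]

/-- Uniform positive lower bound for the second-variation quadratic form when the
Jacobi field value `g(1) = c₁e^{a} + c₂e^{-a}` is bounded away from zero. -/
theorem stmt11 (a m : ℝ) (ha : 0 < a) (hm : 0 < m) :
    ∃ δ > 0, ∀ c₁ c₂ : ℝ, m ≤ |c₁ * Real.exp a + c₂ * Real.exp (-a)| →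
      δ ≤ (1 / 2) * (Real.exp (2 * a) - 1 - 2 * a) * c₁ ^ 2 + 2 * a ^ 2 * c₁ * c₂
        + (1 / 2) * (Real.exp (-(2 * a)) - 1 + 2 * a) * c₂ ^ 2 := by
  set e2 : ℝ := Real.exp (2 * a) with he2
  set em2 : ℝ := Real.exp (-(2 * a)) with hem2
  have he2pos : 0 < e2 := Real.exp_pos _
  have hem2pos : 0 < em2 := Real.exp_pos _
  have hmul : e2 * em2 = 1 := by
    rw [he2, hem2, ← Real.exp_add]; simp
  set A : ℝ := (1/2) * (e2 - 1 - 2*a) with hA_def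
  set C : ℝ := (1/2) * (em2 - 1 + 2*a) with hC_def
  have hA : 0 < A := by
    have h := Real.add_one_lt_exp (show 2*a ≠ 0 by positivity)
    rw [← he2] at h
    rw [hA_def]; linarith
  have hC : 0 < C := by
    have h := Real.add_one_lt_exp (show -(2*a) ≠ 0 by
      simp only [ne_eq, neg_eq_zero]; positivity)
    rw [← hem2] at h
    rw [hC_def]; linarith
  have hε : 0 < A * C - a^4 := by
    have hk := keyquad (2*a) (by positivity)
    rw [← he2, ← hem2] at hk
    nlinarith [hk]
  set S : ℝ := A * em2 + C * e2 with hS_def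
  clear_value e2 em2 A C
  have hS : 0 < S := by positivity
  clear_value S
  set k : ℝ := (1/2) * min (min (A * em2) (C * e2)) ((A * C - a^4) / S) with hk_def
  clear_value k
  have hk : 0 < k := by
    rw [hk_def]
    apply mul_pos (by norm_num)
    exact lt_min (lt_min (by positivity) (by positivity)) (by positivity)
  refine ⟨k * m^2, by positivity, fun c₁ c₂ hL => ?_⟩
  set L : ℝ := c₁ * Real.exp a + c₂ * Real.exp (-a) with hL_def
  -- bounds on k
  have hk1 : k * e2 ≤ A / 2 := by
    have h1 : k ≤ (1/2) * (A * em2) := by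
      rw [hk_def]
      have h2 := min_le_left (min (A * em2) (C * e2)) ((A * C - a^4) / S)
      have h3 := min_le_left (A * em2) (C * e2)
      linarith
    calc k * e2 ≤ (1/2) * (A * em2) * e2 :=
        mul_le_mul_of_nonneg_right h1 he2pos.le
      _ = A / 2 * (e2 * em2) := by ring
      _ = A / 2 := by rw [hmul]; ring
  have hk2 : k * em2 ≤ C / 2 := by
    have h1 : k ≤ (1/2) * (C * e2) := by
      rw [hk_def]
      have h2 := min_le_left (min (A * em2) (C * e2)) ((A * C - a^4) / S)
      have h3 := min_le_right (A * em2) (C * e2)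
      linarith
    calc k * em2 ≤ (1/2) * (C * e2) * em2 :=
        mul_le_mul_of_nonneg_right h1 hem2pos.le
      _ = C / 2 * (em2 * e2) := by ring
      _ = C / 2 := by rw [mul_comm em2 e2, hmul]; ring
  have hk3 : k * S ≤ A * C - a^4 := by
    have h1 : k ≤ (1/2) * ((A * C - a^4) / S) := by
      rw [hk_def]
      have h2 := min_le_right (min (A * em2) (C * e2)) ((A * C - a^4) / S)
      linarith
    calc k * S ≤ (1/2) * ((A * C - a^4) / S) * S :=
        mul_le_mul_of_nonneg_right h1 hS.le
      _ = (1/2) * (A * C - a^4) := by field_simp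
      _ ≤ A * C - a^4 := by linarith
  set P : ℝ := A - k * e2 with hP_def
  set R : ℝ := C - k * em2 with hR_def
  clear_value P R
  have hP : 0 < P := by rw [hP_def]; linarith
  have hR : 0 < R := by rw [hR_def]; linarith
  have hdisc : (a^2 - k)^2 ≤ P * R := by
    have expand : P * R = A * C - k * S + k^2 * (e2 * em2) := by
      rw [hP_def, hR_def, hS_def]; ring
    rw [expand, hmul]
    nlinarith [hk3, mul_nonneg hk.le (sq_nonneg a)]
  have hquad : 0 ≤ P * c₁^2 + 2*(a^2 - k)*c₁*c₂ + R * c₂^2 := by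
    nlinarith [sq_nonneg (P*c₁ + (a^2-k)*c₂), mul_nonneg (sub_nonneg.2 hdisc) (sq_nonneg c₂),
      hP, sq_nonneg c₂]
  have ha1 : Real.exp a * Real.exp a = e2 := by rw [he2, ← Real.exp_add]; ring_nf
  have ha2 : Real.exp (-a) * Real.exp (-a) = em2 := by rw [hem2, ← Real.exp_add]; ring_nf
  have ha3 : Real.exp a * Real.exp (-a) = 1 := by rw [← Real.exp_add]; simp
  have hsplit : A * c₁ ^ 2 + 2 * a ^ 2 * c₁ * c₂ + C * c₂ ^ 2
      = (P * c₁^2 + 2*(a^2 - k)*c₁*c₂ + R * c₂^2) + k * L^2 := by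
    rw [hL_def, hP_def, hR_def, hA_def, hC_def]
    linear_combination (-(k*c₁^2)) * ha1 + (-(k*c₂^2)) * ha2 + (-(2*k*c₁*c₂)) * ha3
  have hL2 : m^2 ≤ L^2 := by
    have h := pow_le_pow_left₀ hm.le hL 2
    rwa [sq_abs] at h
  rw [hsplit]
  have := mul_le_mul_of_nonneg_left hL2 hk.le
  linarith
end
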